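/- Let V: ℝ^n\{0} → ℝ^n be continuous, positively homogeneous of degree zero, and nonvanishing; set m := min_{|u|=1} |V(u)| > 0, and let 0 < η < 1/2 be such that for all x, y with 1/2 ≤ |x| ≤ 3/2, 1/2 ≤ |y| ≤ 3/2 and |x − y| < η, one has |V(x) − V(y)| < m/2. Let S: ℝ^n → ℝ^n be a map and C₁, C, δ > 0 constants such that |S(x) − x| ≤ 2C₁ for all x, and |S(x) − x − V(x)| ≤ 6C/|x| whenever |x| ≥ 1/δ. If z is a k-periodic point of S for some integer k ≥ 1 (S^k(z) = z), then |z| ≤ max{ 1/δ + 2(k−1)C₁, 2(k−1)C₁/η, 24C/m }. In particular, for each k, there are no k-periodic orbits outside the ball of this radius. -/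

import Mathlib

set_option maxHeartbeats 1600000 in
/-- Let `V : ℝ^n\{0} → ℝ^n` be continuous, positively homogeneous of
degree zero, and nonvanishing; let `m > 0` satisfy `m ≤ ‖V u‖` for all unit vectors `u`,
and let `0 < η < 1/2` be such that for all `x, y` in the spherical shell
`{1/2 ≤ ‖·‖ ≤ 3/2}` with `‖x − y‖ < η` one has `‖V x − V y‖ < m/2`.  Let `S : ℝ^n → ℝ^n`
and `C₁, C, δ > 0` be such that `‖S x − x‖ ≤ 2C₁` for all `x` and
`‖S x − x − V x‖ ≤ 6C/‖x‖` whenever `‖x‖ ≥ 1/δ`.  If `z` is a `k`-periodic point of `S`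
for some `k ≥ 1` (`S^[k] z = z`), then
`‖z‖ ≤ max { 1/δ + 2(k−1)C₁, 2(k−1)C₁/η, 24C/m }`: there are no `k`-periodic orbits
outside the ball of this radius. -/
theorem stmt13 {n : ℕ} (V : EuclideanSpace ℝ (Fin n) → EuclideanSpace ℝ (Fin n))
    (hVcont : ContinuousOn V {(0 : EuclideanSpace ℝ (Fin n))}ᶜ)
    (hhom : ∀ c : ℝ, 0 < c → ∀ x : EuclideanSpace ℝ (Fin n), x ≠ 0 → V (c • x) = V x)
    (m : ℝ) (hm : 0 < m)
    (hmV : ∀ u : EuclideanSpace ℝ (Fin n), ‖u‖ = 1 → m ≤ ‖V u‖)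
    (η : ℝ) (hη0 : 0 < η) (hη : η < 1 / 2)
    (hcont : ∀ x y : EuclideanSpace ℝ (Fin n),
      1 / 2 ≤ ‖x‖ → ‖x‖ ≤ 3 / 2 → 1 / 2 ≤ ‖y‖ → ‖y‖ ≤ 3 / 2 → ‖x - y‖ < η →
      ‖V x - V y‖ < m / 2)
    (S : EuclideanSpace ℝ (Fin n) → EuclideanSpace ℝ (Fin n))
    (C₁ C δ : ℝ) (hC₁ : 0 < C₁) (hC : 0 < C) (hδ : 0 < δ)
    (hS1 : ∀ x, ‖S x - x‖ ≤ 2 * C₁)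
    (hS2 : ∀ x : EuclideanSpace ℝ (Fin n), 1 / δ ≤ ‖x‖ → ‖S x - x - V x‖ ≤ 6 * C / ‖x‖)
    (k : ℕ) (hk : 1 ≤ k) (z : EuclideanSpace ℝ (Fin n)) (hz : S^[k] z = z) :
    ‖z‖ ≤ max (max (1 / δ + 2 * ((k : ℝ) - 1) * C₁) (2 * ((k : ℝ) - 1) * C₁ / η))
        (24 * C / m) := by

  by_contra hcon
  push_neg at hcon
  rw [max_lt_iff, max_lt_iff] at hcon
  obtain ⟨⟨hb1, hb2⟩, hb3⟩ := hcon
  have hRpos : 0 < ‖z‖ := lt_trans (div_pos (by linarith) hm) hb3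
  have hk1 : (1:ℝ) ≤ (k:ℝ) := by exact_mod_cast hk
  have hC₁k : 0 ≤ 2*((k:ℝ)-1)*C₁ := by nlinarith
  have hsmall : 2*((k:ℝ)-1)*C₁ < η * ‖z‖ := by
    rw [div_lt_iff₀ hη0] at hb2; nlinarith
  have hηR : η * ‖z‖ < ‖z‖/2 := by nlinarith
  have hdist : ∀ j : ℕ, ‖S^[j] z - z‖ ≤ 2 * j * C₁ := by
    intro j
    induction j with
    | zero => simp
    | succ j ih =>
      have h1 : S^[j+1] z - z = (S (S^[j] z) - S^[j] z) + (S^[j] z - z) := by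
        rw [Function.iterate_succ_apply']; abel
      calc ‖S^[j+1] z - z‖ ≤ ‖S (S^[j] z) - S^[j] z‖ + ‖S^[j] z - z‖ := by
            rw [h1]; exact norm_add_le _ _
        _ ≤ 2*C₁ + 2*(j:ℝ)*C₁ := add_le_add (hS1 _) ih
        _ = 2*((j:ℕ)+1:ℕ)*C₁ := by push_cast; ring
  have hdistk : ∀ j : ℕ, j < k → ‖S^[j] z - z‖ ≤ 2*((k:ℝ)-1)*C₁ := by
    intro j hj
    refine (hdist j).trans ?_
    have hjk : (j:ℝ) ≤ (k:ℝ) - 1 := by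
      have : ((j:ℝ) + 1) ≤ (k:ℝ) := by exact_mod_cast hj
      linarith
    nlinarith
  have hlow : ∀ j : ℕ, j < k → ‖z‖/2 < ‖S^[j] z‖ := by
    intro j hj
    have h := hdistk j hj
    have h2 : ‖z‖ - ‖S^[j] z‖ ≤ ‖S^[j] z - z‖ := by
      have := norm_sub_norm_le z (S^[j] z)
      rwa [norm_sub_rev (S^[j] z) z] at h ⊢ <;> linarith
    linarith
  have hhigh : ∀ j : ℕ, j < k → ‖S^[j] z‖ < 3 * ‖z‖ / 2 := by
    intro j hj
    have h := hdistk j hj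
    have h2 : ‖S^[j] z‖ - ‖z‖ ≤ ‖S^[j] z - z‖ := norm_sub_norm_le _ _
    linarith
  have hne : ∀ j : ℕ, j < k → S^[j] z ≠ 0 := by
    intro j hj h0
    have := hlow j hj
    rw [h0, norm_zero] at this
    linarith
  have hzne : z ≠ 0 := by
    intro h0; rw [h0, norm_zero] at hRpos; exact lt_irrefl _ hRpos
  -- norm of scaled vectors
  have hwnorm : ∀ x : EuclideanSpace ℝ (Fin n), ‖(‖z‖⁻¹ : ℝ) • x‖ = ‖x‖ / ‖z‖ := by
    intro x
    rw [norm_smul, Real.norm_eq_abs, abs_inv, abs_of_pos hRpos, inv_mul_eq_div]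
  have hVz : m ≤ ‖V z‖ := by
    have h1 : V ((‖z‖⁻¹ : ℝ) • z) = V z := hhom _ (inv_pos.mpr hRpos) z hzne
    have h2 : ‖(‖z‖⁻¹ : ℝ) • z‖ = 1 := by
      rw [hwnorm, div_self (ne_of_gt hRpos)]
    have := hmV _ h2
    rwa [h1] at this
  have hVclose : ∀ j : ℕ, j < k → ‖V (S^[j] z) - V z‖ < m / 2 := by
    intro j hj
    have h1 : V ((‖z‖⁻¹ : ℝ) • S^[j] z) = V (S^[j] z) :=
      hhom _ (inv_pos.mpr hRpos) _ (hne j hj)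
    have h2 : V ((‖z‖⁻¹ : ℝ) • z) = V z := hhom _ (inv_pos.mpr hRpos) z hzne
    rw [← h1, ← h2]
    apply hcont
    · rw [hwnorm, le_div_iff₀ hRpos]
      have := hlow j hj; linarith
    · rw [hwnorm, div_le_iff₀ hRpos]
      have := hhigh j hj; linarith
    · rw [hwnorm, le_div_iff₀ hRpos]; linarith
    · rw [hwnorm, div_le_iff₀ hRpos]; linarith
    · rw [← smul_sub, hwnorm, div_lt_iff₀ hRpos]
      have := hdistk j hj
      calc ‖S^[j] z - z‖ ≤ 2*((k:ℝ)-1)*C₁ := this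
        _ < η * ‖z‖ := hsmall
  have herr : ∀ j : ℕ, j < k → ‖S (S^[j] z) - S^[j] z - V (S^[j] z)‖ ≤ 12 * C / ‖z‖ := by
    intro j hj
    have hlj := hlow j hj
    have h1δ : 1/δ ≤ ‖S^[j] z‖ := by
      have h := hdistk j hj
      have h2 : ‖z‖ - ‖S^[j] z‖ ≤ ‖S^[j] z - z‖ := by
        rw [norm_sub_rev]; exact norm_sub_norm_le _ _
      linarith
    refine (hS2 _ h1δ).trans ?_
    rw [div_le_div_iff₀ (by linarith) hRpos]
    nlinarith
  -- telescoping sum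
  have hsum0 : ∑ j ∈ Finset.range k, (S^[j+1] z - S^[j] z) = 0 := by
    rw [Finset.sum_range_sub (fun j => S^[j] z)]
    simp [hz]
  have hdecomp : ∀ j : ℕ, S^[j+1] z - S^[j] z
      = V z + ((V (S^[j] z) - V z) + (S (S^[j] z) - S^[j] z - V (S^[j] z))) := by
    intro j
    rw [Function.iterate_succ_apply']
    abel
  have hkey : (k : ℕ) • V z
      = -∑ j ∈ Finset.range k, ((V (S^[j] z) - V z) + (S (S^[j] z) - S^[j] z - V (S^[j] z))) := by
    have h0 := hsum0
    rw [Finset.sum_congr rfl (fun j _ => hdecomp j), Finset.sum_add_distrib,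
      Finset.sum_const, Finset.card_range] at h0
    exact eq_neg_of_add_eq_zero_left h0
  have hnormsum : ‖(k : ℕ) • V z‖ < (k : ℝ) * (m / 2 + 12 * C / ‖z‖) := by
    rw [hkey, norm_neg]
    calc ‖∑ j ∈ Finset.range k, ((V (S^[j] z) - V z) + (S (S^[j] z) - S^[j] z - V (S^[j] z)))‖
        ≤ ∑ j ∈ Finset.range k,
          ‖(V (S^[j] z) - V z) + (S (S^[j] z) - S^[j] z - V (S^[j] z))‖ :=
          norm_sum_le _ _
      _ < ∑ _j ∈ Finset.range k, (m / 2 + 12 * C / ‖z‖) := by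
          apply Finset.sum_lt_sum_of_nonempty (Finset.nonempty_range_iff.mpr (by omega))
          intro j hj
          rw [Finset.mem_range] at hj
          calc ‖(V (S^[j] z) - V z) + (S (S^[j] z) - S^[j] z - V (S^[j] z))‖
              ≤ ‖V (S^[j] z) - V z‖ + ‖S (S^[j] z) - S^[j] z - V (S^[j] z)‖ :=
                norm_add_le _ _
            _ < m / 2 + 12 * C / ‖z‖ :=
                add_lt_add_of_lt_of_le (hVclose j hj) (herr j hj)
      _ = (k : ℝ) * (m / 2 + 12 * C / ‖z‖) := by
          rw [Finset.sum_const, Finset.card_range, nsmul_eq_mul]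
  have hnorml : (k : ℝ) * m ≤ ‖(k : ℕ) • V z‖ := by
    rw [← Nat.cast_smul_eq_nsmul ℝ, norm_smul, Real.norm_natCast]
    exact mul_le_mul_of_nonneg_left hVz (by positivity)
  have hfin : m / 2 * ‖z‖ < 12 * C := by
    have h := lt_of_le_of_lt hnorml hnormsum
    have hkpos : (0:ℝ) < (k:ℝ) := by linarith
    have hmlt : m < m / 2 + 12 * C / ‖z‖ := (mul_lt_mul_iff_right₀ hkpos).mp h
    have h12 : m / 2 < 12 * C / ‖z‖ := by linarith
    rw [lt_div_iff₀ hRpos] at h12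
    linarith
  rw [div_lt_iff₀ hm] at hb3
  nlinarith
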